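/- Consider the infinite transition matrix A on alphabet ℕ defined by A(1,2) = 1, A(2n, 2n+2) = 1, A(2n+1, 2n-1) = 1 for all n ≥ 1, and A = 0 elsewhere. Then A has no zero rows and no zero columns, A satisfies condition (L) (vacuously: it has no cycles at all), but A does not satisfy condition (I) (the set 𝒮 of vertices lying on two distinct first-return cycles is empty, yet the alphabet is nonempty). -/
import Mathlib


/-- Admissible word over the alphabet `ℕ`. -/
def AdmissibleWordN (A : ℕ → ℕ → Bool) (r : ℕ) (w : ℕ → ℕ) : Prop :=
  ∀ k, k + 1 < r → A (w k) (w (k + 1)) = true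

/-- A first-return word at `i`. -/
def FirstReturnWordN (A : ℕ → ℕ → Bool) (i : ℕ) (r : ℕ) (w : ℕ → ℕ) : Prop :=
  2 ≤ r ∧ AdmissibleWordN A r w ∧ w 0 = i ∧ w (r - 1) = i ∧ ∀ k, 0 < k → k < r - 1 → w k ≠ i

/-- `i` lies in `𝒮`: there are two distinct first-return words at `i`. -/
def MemSN (A : ℕ → ℕ → Bool) (i : ℕ) : Prop :=
  ∃ (r s : ℕ) (w v : ℕ → ℕ), FirstReturnWordN A i r w ∧ FirstReturnWordN A i s v ∧
    (r ≠ s ∨ ∃ k, k < r ∧ w k ≠ v k)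

/-- The matrix `A(1,2) = A(2n, 2n+2) = A(2n+1, 2n-1) = 1` (for `n ≥ 1`), zero elsewhere,
on the alphabet `{1, 2, 3, ...}`. -/
def Aline : ℕ → ℕ → Bool := fun i j =>
  (i == 1 && j == 2) || (decide (2 ≤ i) && decide (i % 2 = 0) && (j == i + 2)) ||
    (decide (3 ≤ i) && decide (i % 2 = 1) && (j + 2 == i))

def rkA (i : ℕ) : ℤ := if i % 2 = 1 then -(i:ℤ) else i

lemma edge_lt {i j : ℕ} (h : Aline i j = true) : rkA i < rkA j := by
  simp only [Aline, Bool.or_eq_true, Bool.and_eq_true, beq_iff_eq, decide_eq_true_eq] at h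
  rcases h with (⟨hi, hj⟩ | ⟨⟨h2, he⟩, hj⟩) | ⟨⟨h3, ho⟩, hj⟩
  · subst hi hj; norm_num [rkA]
  · subst hj
    have hj2 : (i + 2) % 2 = 0 := by omega
    simp [rkA, he, hj2]
  · have hj2 : j % 2 = 1 := by omega
    simp [rkA, ho, hj2]
    omega

lemma chain_le {r : ℕ} {c : ℕ → ℕ} (h : AdmissibleWordN Aline r c) :
    ∀ m, m < r → rkA (c 0) ≤ rkA (c m) := by
  intro m
  induction m with
  | zero => intro _; exact le_refl _
  | succ n ih =>
    intro hm
    exact le_trans (ih (by omega)) (le_of_lt (edge_lt (h n hm)))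

lemma frw_false (i r : ℕ) (w : ℕ → ℕ) : ¬ FirstReturnWordN Aline i r w := by
  rintro ⟨hr, hw, h0, hlast, -⟩
  have hedge : Aline (w (r - 2)) (w (r - 2 + 1)) = true := hw (r - 2) (by omega)
  have h1 : r - 2 + 1 = r - 1 := by omega
  rw [h1] at hedge
  have := chain_le hw (r - 2) (by omega)
  have := edge_lt hedge
  rw [hlast, h0] at *
  omega

/-- The matrix `Aline` has no zero rows and no zero columns (over the alphabet of
positive integers), has no cycles at all — so it satisfies condition (L) vacuously —
its set `𝒮` is empty, and it does not satisfy condition (I). -/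
theorem Aline_conditionL_not_conditionI :
    (∀ i : ℕ, 1 ≤ i → ∃ j, Aline i j = true) ∧
    (∀ j : ℕ, 1 ≤ j → ∃ i, Aline i j = true) ∧
    (∀ (k : ℕ) (c : ℕ → ℕ), 1 ≤ k → AdmissibleWordN Aline k c →
        Aline (c (k - 1)) (c 0) ≠ true) ∧
    (∀ (k : ℕ) (c : ℕ → ℕ), 1 ≤ k → AdmissibleWordN Aline k c →
        Aline (c (k - 1)) (c 0) = true →
        ∃ m, m < k ∧ ∃ y, Aline (c m) y = true ∧ y ≠ c ((m + 1) % k)) ∧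
    (∀ i : ℕ, ¬ MemSN Aline i) ∧
    ¬ (∀ i : ℕ, 1 ≤ i → ∃ (r : ℕ) (w : ℕ → ℕ),
        1 ≤ r ∧ AdmissibleWordN Aline r w ∧ w 0 = i ∧ MemSN Aline (w (r - 1))) := by
  have hnocyc : ∀ (k : ℕ) (c : ℕ → ℕ), 1 ≤ k → AdmissibleWordN Aline k c →
      Aline (c (k - 1)) (c 0) ≠ true := by
    intro k c hk hadm hcyc
    have h1 := chain_le hadm (k - 1) (by omega)
    have h2 := edge_lt hcyc
    omega
  refine ⟨?_, ?_, hnocyc, ?_, ?_, ?_⟩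
  · intro i hi
    rcases Nat.even_or_odd i with ⟨n, hn⟩ | ⟨n, hn⟩
    · exact ⟨i + 2, by simp [Aline]; omega⟩
    · rcases Nat.eq_or_lt_of_le hi with h1 | h1
      · exact ⟨2, by rw [← h1]; decide⟩
      · exact ⟨i - 2, by simp [Aline]; omega⟩
  · intro j hj
    rcases Nat.even_or_odd j with ⟨n, hn⟩ | ⟨n, hn⟩
    · rcases Nat.eq_or_lt_of_le (show 2 ≤ j by omega) with h1 | h1
      · exact ⟨1, by rw [← h1]; decide⟩
      · exact ⟨j - 2, by simp [Aline]; omega⟩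
    · exact ⟨j + 2, by simp [Aline]; omega⟩
  · intro k c hk hadm hcyc
    exact absurd hcyc (hnocyc k c hk hadm)
  · rintro i ⟨r, s, w, v, hw, -, -⟩
    exact frw_false i r w hw
  · intro H
    obtain ⟨r, w, -, -, -, hS⟩ := H 1 le_rfl
    obtain ⟨r', s', w', v', hw', -, -⟩ := hS
    exact frw_false _ r' w' hw'
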